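/- arXiv:2412.01802 — 2 statements merged into one kernel-verified Lean document; each statement's English description precedes it below -/
import Mathlib

section
/- Let p, q be primes with p ≡ 1 (mod q), and let G = ⟨a, b | aᵖ = bᵠ = 1, b a b⁻¹ = aʳ⟩ where r has multiplicative order q modulo p. Then for every integer n with 1 ≤ n ≤ q−1, the set C = {aʲ bⁿ : 0 ≤ j ≤ p−1} is a conjugacy class in G of size p. -/
section Aux

variable {G : Type*} [Group G]

private lemma stmt10_conj_key (a b : G) (r : ℕ) (hrel : b * a * b⁻¹ = a ^ r) :
    ∀ (m : ℕ) (k : ℤ), b ^ m * a ^ k * (b ^ m)⁻¹ = a ^ (k * (r : ℤ) ^ m) := by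
  intro m
  induction m with
  | zero => intro k; simp
  | succ m ih =>
    intro k
    have hc : ∀ s : ℤ, b * a ^ s * b⁻¹ = (b * a * b⁻¹) ^ s := by
      intro s
      have := map_zpow (MulAut.conj b) a s
      simpa [MulAut.conj_apply] using this
    calc b ^ (m + 1) * a ^ k * (b ^ (m + 1))⁻¹
        = b * (b ^ m * a ^ k * (b ^ m)⁻¹) * b⁻¹ := by
          rw [pow_succ']; group
      _ = b * a ^ (k * (r : ℤ) ^ m) * b⁻¹ := by rw [ih]
      _ = (b * a * b⁻¹) ^ (k * (r : ℤ) ^ m) := hc _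
      _ = (a ^ r) ^ (k * (r : ℤ) ^ m) := by rw [hrel]
      _ = a ^ (k * (r : ℤ) ^ (m + 1)) := by
          rw [← zpow_natCast a r, ← zpow_mul]
          ring_nf

end Aux

/-- Let `p, q` be primes with `p ≡ 1 (mod q)`, and let
`G = ⟨a, b | aᵖ = bᵠ = 1, b a b⁻¹ = aʳ⟩` be the nonabelian group of order `pq`, where `r`
has multiplicative order `q` modulo `p`.  Then for every integer `n` with `1 ≤ n ≤ q−1`, the
set `C = {aʲ bⁿ : 0 ≤ j ≤ p−1}` is a conjugacy class in `G` (namely the class of `bⁿ`) of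
size `p`. -/
theorem stmt10 {G : Type*} [Group G] [Fintype G]
    (p q : ℕ) (hp : p.Prime) (hq : q.Prime) (hpq : p % q = 1)
    (r : ℕ) (hr : orderOf (r : ZMod p) = q)
    (a b : G) (hcard : Nat.card G = p * q)
    (ha : orderOf a = p) (hb : orderOf b = q)
    (hrel : b * a * b⁻¹ = a ^ r)
    (hgen : Subgroup.closure {a, b} = (⊤ : Subgroup G))
    (n : ℕ) (hn1 : 1 ≤ n) (hn2 : n ≤ q - 1) :
    {x : G | ∃ j : ℕ, j ≤ p - 1 ∧ x = a ^ j * b ^ n} = {x : G | IsConj (b ^ n) x} ∧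
      Nat.card {x : G | ∃ j : ℕ, j ≤ p - 1 ∧ x = a ^ j * b ^ n} = p := by
  haveI : Fact p.Prime := ⟨hp⟩
  have hp0 : 0 < p := hp.pos
  have hq2 : 2 ≤ q := hq.two_le
  have key := stmt10_conj_key a b r hrel
  -- a^m depends only on m mod p
  have azpow : ∀ m k : ℤ, (p : ℤ) ∣ m - k → a ^ m = a ^ k := by
    intro m k ⟨c, hc⟩
    have hm : m = k + (p : ℤ) * c := by linarith
    have hap : a ^ (p : ℤ) = 1 := by
      rw [zpow_natCast, ← ha, pow_orderOf_eq_one]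
    rw [hm, zpow_add, zpow_mul, hap, one_zpow, mul_one]
  -- r^n ≠ 1 in ZMod p
  have hrn : ((r : ZMod p)) ^ n ≠ 1 := by
    intro h
    have hd := orderOf_dvd_of_pow_eq_one h
    rw [hr] at hd
    have := Nat.le_of_dvd (by omega) hd
    omega
  have ht : (1 - (r : ZMod p) ^ n) ≠ 0 := sub_ne_zero.mpr (Ne.symm hrn)
  -- conjugation of b^n by powers of a
  have conjA : ∀ k : ℤ, a ^ k * b ^ n * (a ^ k)⁻¹ = a ^ (k * (1 - (r : ℤ) ^ n)) * b ^ n := by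
    intro k
    have h1 : b ^ n * a ^ (-k) * (b ^ n)⁻¹ = a ^ (-k * (r : ℤ) ^ n) := key n (-k)
    calc a ^ k * b ^ n * (a ^ k)⁻¹
        = a ^ k * (b ^ n * a ^ (-k) * (b ^ n)⁻¹) * b ^ n := by
          group
      _ = a ^ k * a ^ (-k * (r : ℤ) ^ n) * b ^ n := by rw [h1]
      _ = a ^ (k * (1 - (r : ℤ) ^ n)) * b ^ n := by
          rw [← zpow_add]; congr 1; ring
  -- every element of G has the form a^i * b^j
  have hbq : b ^ q = 1 := by rw [← hb, pow_orderOf_eq_one]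
  have hH : ∀ g : G, ∃ (i : ℤ) (j : ℕ), g = a ^ i * b ^ j := by
    let H : Subgroup G :=
      { carrier := {x | ∃ (i : ℤ) (j : ℕ), x = a ^ i * b ^ j}
        one_mem' := ⟨0, 0, by simp⟩
        mul_mem' := by
          rintro _ _ ⟨i, j, rfl⟩ ⟨k, l, rfl⟩
          refine ⟨i + k * (r : ℤ) ^ j, j + l, ?_⟩
          calc (a ^ i * b ^ j) * (a ^ k * b ^ l)
              = a ^ i * (b ^ j * a ^ k * (b ^ j)⁻¹) * (b ^ j * b ^ l) := by group
            _ = a ^ i * a ^ (k * (r : ℤ) ^ j) * b ^ (j + l) := by rw [key j k, pow_add]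
            _ = a ^ (i + k * (r : ℤ) ^ j) * b ^ (j + l) := by rw [← zpow_add]
        inv_mem' := by
          rintro _ ⟨i, j, rfl⟩
          refine ⟨-i * (r : ℤ) ^ (j * (q - 1)), j * (q - 1), ?_⟩
          have hbinv : (b ^ j)⁻¹ = b ^ (j * (q - 1)) := by
            rw [eq_comm, eq_inv_iff_mul_eq_one, ← pow_add]
            have : j * (q - 1) + j = q * j := by
              have : 1 ≤ q := by omega
              cases q with
              | zero => omega
              | succ m => simp only [Nat.add_sub_cancel]; ring
            rw [this, pow_mul, hbq, one_pow]
          calc (a ^ i * b ^ j)⁻¹ = (b ^ j)⁻¹ * a ^ (-i) := by group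
            _ = b ^ (j * (q - 1)) * a ^ (-i) := by rw [hbinv]
            _ = (b ^ (j * (q - 1)) * a ^ (-i) * (b ^ (j * (q - 1)))⁻¹) * b ^ (j * (q - 1)) := by
                group
            _ = a ^ (-i * (r : ℤ) ^ (j * (q - 1))) * b ^ (j * (q - 1)) := by
                rw [key (j * (q - 1)) (-i)] }
    have ha' : a ∈ H := ⟨1, 0, by simp⟩
    have hb' : b ∈ H := ⟨0, 1, by simp⟩
    have hle : Subgroup.closure {a, b} ≤ H := by
      rw [Subgroup.closure_le]
      rintro x (rfl | rfl) <;> assumption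
    intro g
    exact hle (hgen ▸ Subgroup.mem_top g)
  -- set equality
  have hset : {x : G | ∃ j : ℕ, j ≤ p - 1 ∧ x = a ^ j * b ^ n} = {x : G | IsConj (b ^ n) x} := by
    ext x
    simp only [Set.mem_setOf_eq]
    constructor
    · rintro ⟨j, hj, rfl⟩
      rw [isConj_iff]
      set t : ZMod p := 1 - (r : ZMod p) ^ n with htdef
      set k : ℕ := ((j : ZMod p) * t⁻¹).val with hkdef
      refine ⟨a ^ (k : ℤ), ?_⟩
      rw [conjA (k : ℤ)]
      congr 1
      have hcast : (((k : ℤ) * (1 - (r : ℤ) ^ n) - (j : ℤ) : ℤ) : ZMod p) = 0 := by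
        push_cast
        have hk : ((k : ZMod p)) = (j : ZMod p) * t⁻¹ := by
          rw [hkdef, ZMod.natCast_val, ZMod.cast_id]
        rw [hk, htdef]
        field_simp
        simp
      have hdvd : (p : ℤ) ∣ (k : ℤ) * (1 - (r : ℤ) ^ n) - (j : ℤ) :=
        (ZMod.intCast_zmod_eq_zero_iff_dvd _ p).mp hcast
      calc a ^ ((k : ℤ) * (1 - (r : ℤ) ^ n)) = a ^ (j : ℤ) := azpow _ _ hdvd
        _ = a ^ j := by rw [zpow_natCast]
    · intro h
      obtain ⟨c, hc⟩ := isConj_iff.mp h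
      obtain ⟨i, j, rfl⟩ := hH c
      have hx : x = a ^ (i * (1 - (r : ℤ) ^ n)) * b ^ n := by
        rw [← hc]
        calc a ^ i * b ^ j * b ^ n * (a ^ i * b ^ j)⁻¹
            = a ^ i * (b ^ j * b ^ n * (b ^ j)⁻¹) * (a ^ i)⁻¹ := by group
          _ = a ^ i * b ^ n * (a ^ i)⁻¹ := by
              congr 2
              rw [← pow_add, Nat.add_comm, pow_add]; group
          _ = a ^ (i * (1 - (r : ℤ) ^ n)) * b ^ n := conjA i
      set m : ℤ := i * (1 - (r : ℤ) ^ n) with hmdef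
      refine ⟨(m % (p : ℤ)).toNat, ?_, ?_⟩
      · have h1 : 0 ≤ m % (p : ℤ) := Int.emod_nonneg m (by exact_mod_cast hp0.ne')
        have h2 : m % (p : ℤ) < p := Int.emod_lt_of_pos m (by exact_mod_cast hp0)
        omega
      · rw [hx]
        congr 1
        have h1 : 0 ≤ m % (p : ℤ) := Int.emod_nonneg m (by exact_mod_cast hp0.ne')
        have : ((m % (p : ℤ)).toNat : ℤ) = m % (p : ℤ) := Int.toNat_of_nonneg h1
        rw [← zpow_natCast a (m % (p : ℤ)).toNat, this]
        refine azpow m (m % (p : ℤ)) ?_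
        exact (Int.mod_modEq m p).dvd
  refine ⟨hset, ?_⟩
  -- cardinality
  have hrange : {x : G | ∃ j : ℕ, j ≤ p - 1 ∧ x = a ^ j * b ^ n}
      = Set.range (fun i : Fin p => a ^ (i : ℕ) * b ^ n) := by
    ext x
    simp only [Set.mem_setOf_eq, Set.mem_range]
    constructor
    · rintro ⟨j, hj, rfl⟩
      exact ⟨⟨j, by omega⟩, rfl⟩
    · rintro ⟨i, rfl⟩
      exact ⟨(i : ℕ), by omega, rfl⟩
  have hinj : Function.Injective (fun i : Fin p => a ^ (i : ℕ) * b ^ n) := by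
    intro i1 i2 h
    simp only [mul_left_inj] at h
    have h' := (pow_eq_pow_iff_modEq).mp h
    rw [ha] at h'
    have : (i1 : ℕ) % p = (i2 : ℕ) % p := h'
    rw [Nat.mod_eq_of_lt i1.isLt, Nat.mod_eq_of_lt i2.isLt] at this
    exact Fin.ext this
  rw [hrange, Nat.card_range_of_injective hinj, Nat.card_eq_fintype_card, Fintype.card_fin]
end

section
/- Let K be a number field of degree n_K over ℚ, and let 𝔞 be a nonzero ideal of its ring of integers O_K. Let ω(𝔞) denote the number of distinct prime ideals dividing 𝔞. Then for every δ > 0, ω(𝔞) ≤ e^{1+1/δ} · n_K + δ · log N(𝔞), where N(𝔞) = |O_K/𝔞| is the absolute norm. -/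
open NumberField



/-- In any commutative ring, if a nonzero natural number lies in a prime ideal,
then some rational prime factor of it lies in the ideal. -/
lemma aux_exists_prime {R : Type*} [CommRing R] (𝔭 : Ideal R) (hp : 𝔭.IsPrime) :
    ∀ n : ℕ, n ≠ 0 → (n : R) ∈ 𝔭 → ∃ p : ℕ, p.Prime ∧ p ∣ n ∧ (p : R) ∈ 𝔭 := by
  intro n
  induction n using Nat.strong_induction_on with
  | _ n ih =>
    intro hn hmem
    rcases eq_or_ne n 1 with rfl | hn1
    · exact absurd (𝔭.eq_top_iff_one.mpr (by simpa using hmem)) hp.ne_top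
    · have hq : (n.minFac).Prime := Nat.minFac_prime hn1
      have hd : n.minFac ∣ n := Nat.minFac_dvd n
      have hfac : n = n.minFac * (n / n.minFac) := (Nat.mul_div_cancel' hd).symm
      have : ((n.minFac : R)) * ((n / n.minFac : ℕ) : R) ∈ 𝔭 := by
        rw [← Nat.cast_mul, ← hfac]; exact hmem
      rcases hp.mem_or_mem this with h | h
      · exact ⟨n.minFac, hq, hd, h⟩
      · have hm0 : n / n.minFac ≠ 0 := by
          intro h0; rw [h0, mul_zero] at hfac; exact hn hfac
        have hlt : n / n.minFac < n :=
          Nat.div_lt_self (Nat.pos_of_ne_zero hn) hq.one_lt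
        obtain ⟨p, hp', hpd, hpm⟩ := ih _ hlt hm0 h
        exact ⟨p, hp', hpd.trans (Nat.div_dvd_of_dvd hd), hpm⟩

lemma aux_absNorm_span_natCast (K : Type*) [Field K] [NumberField K] (p : ℕ) :
    Ideal.absNorm (Ideal.span {(p : 𝓞 K)}) = p ^ Module.finrank ℚ K := by
  have h : (p : 𝓞 K) = algebraMap ℤ (𝓞 K) (p : ℤ) := by simp
  rw [Ideal.absNorm_span_singleton, h,
    Algebra.norm_algebraMap_of_basis (Module.Free.chooseBasis ℤ (𝓞 K)),
    ← Module.finrank_eq_card_chooseBasisIndex, NumberField.RingOfIntegers.rank]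
  simp [Int.natAbs_pow]

lemma aux_card_fiber (K : Type*) [Field K] [NumberField K] (p : ℕ) (hp : p.Prime)
    (T : Finset (Ideal (𝓞 K)))
    (hT : ∀ 𝔭 ∈ T, 𝔭.IsPrime ∧ 𝔭 ≠ ⊥ ∧ (p : 𝓞 K) ∈ 𝔭) :
    T.card ≤ Module.finrank ℚ K := by
  set n := Module.finrank ℚ K
  set I : Ideal (𝓞 K) := Ideal.span {(p : 𝓞 K)}
  have hNI : Ideal.absNorm I = p ^ n := by
    rw [Ideal.absNorm_span_singleton, show ((p : 𝓞 K)) = algebraMap ℤ (𝓞 K) (p : ℤ) by simp,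
      Algebra.norm_algebraMap_of_basis (Module.Free.chooseBasis ℤ (𝓞 K)),
      ← Module.finrank_eq_card_chooseBasisIndex, NumberField.RingOfIntegers.rank]
    simp [Int.natAbs_pow]
    rfl
  have hprod : (∏ 𝔭 ∈ T, 𝔭) ∣ I := by
    refine Finset.prod_primes_dvd I (fun 𝔭 h𝔭 => ?_) (fun 𝔭 h𝔭 => ?_)
    · exact (Ideal.prime_of_isPrime (hT 𝔭 h𝔭).2.1 (hT 𝔭 h𝔭).1)
    · exact (Ideal.dvd_iff_le).mpr ((Ideal.span_singleton_le_iff_mem _).mpr (hT 𝔭 h𝔭).2.2)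
  have hNdvd : (∏ 𝔭 ∈ T, Ideal.absNorm 𝔭) ∣ p ^ n := by
    rw [← hNI, ← map_prod]
    exact Ideal.absNorm_dvd_absNorm_of_le (Ideal.le_of_dvd hprod)
  have hple : ∀ 𝔭 ∈ T, p ≤ Ideal.absNorm 𝔭 := by
    intro 𝔭 h𝔭
    have hd : Ideal.absNorm 𝔭 ∣ p ^ n := (Finset.dvd_prod_of_mem _ h𝔭).trans hNdvd
    obtain ⟨k, hk, hke⟩ := (Nat.dvd_prime_pow hp).mp hd
    have hk0 : k ≠ 0 := by
      rintro rfl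
      rw [pow_zero] at hke
      exact (hT 𝔭 h𝔭).1.ne_top (Ideal.absNorm_eq_one_iff.mp hke)
    calc p = p ^ 1 := (pow_one p).symm
    _ ≤ p ^ k := Nat.pow_le_pow_right hp.pos (Nat.one_le_iff_ne_zero.mpr hk0)
    _ = Ideal.absNorm 𝔭 := hke.symm
  have hfin : p ^ T.card ≤ p ^ n := by
    calc p ^ T.card = ∏ _𝔭 ∈ T, p := by rw [Finset.prod_const]
    _ ≤ ∏ 𝔭 ∈ T, Ideal.absNorm 𝔭 := Finset.prod_le_prod' hple
    _ ≤ p ^ n := Nat.le_of_dvd (pow_pos hp.pos n) hNdvd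
  exact (Nat.pow_le_pow_iff_right hp.one_lt).mp hfin


/-- Let `K` be a number field of degree `n_K` over `ℚ` and let `𝔞` be a
nonzero ideal of its ring of integers `O_K`.  Let `ω(𝔞)` denote the number of distinct prime
ideals dividing `𝔞` (equivalently, the prime ideals containing `𝔞`).  Then for every `δ > 0`,
`ω(𝔞) ≤ e^{1+1/δ} · n_K + δ · log N(𝔞)`, where `N(𝔞) = |O_K/𝔞|` is the absolute norm. -/
theorem stmt14 (K : Type*) [Field K] [NumberField K]
    (𝔞 : Ideal (𝓞 K)) (h𝔞 : 𝔞 ≠ 0) (δ : ℝ) (hδ : 0 < δ) :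
    (Nat.card {𝔭 : Ideal (𝓞 K) | 𝔭.IsPrime ∧ 𝔞 ≤ 𝔭} : ℝ) ≤
      Real.exp (1 + 1 / δ) * (Module.finrank ℚ K) + δ * Real.log (Ideal.absNorm 𝔞) := by
  classical
  set n := Module.finrank ℚ K with hn
  set N := Ideal.absNorm 𝔞 with hNdef
  have hNpos : 0 < N :=
    Ideal.absNorm_pos_iff_mem_nonZeroDivisors.mpr (mem_nonZeroDivisors_of_ne_zero h𝔞)
  set S := {𝔭 : Ideal (𝓞 K) | 𝔭.IsPrime ∧ 𝔞 ≤ 𝔭} with hSdef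
  have key : ∀ 𝔭 ∈ S, 𝔭.IsPrime ∧ 𝔭 ≠ ⊥ ∧ 𝔭 ∣ 𝔞 ∧ 2 ≤ Ideal.absNorm 𝔭 ∧
      Ideal.absNorm 𝔭 ≤ N := by
    rintro 𝔭 ⟨hp, hle⟩
    have hbot : 𝔭 ≠ ⊥ := by
      rintro rfl; exact h𝔞 (le_bot_iff.mp hle)
    have hdvdN : Ideal.absNorm 𝔭 ∣ N := Ideal.absNorm_dvd_absNorm_of_le hle
    have h0 : Ideal.absNorm 𝔭 ≠ 0 := by
      intro h; rw [h] at hdvdN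
      exact hNpos.ne' (Nat.eq_zero_of_zero_dvd hdvdN)
    have h1 : Ideal.absNorm 𝔭 ≠ 1 := fun h => hp.ne_top (Ideal.absNorm_eq_one_iff.mp h)
    exact ⟨hp, hbot, Ideal.dvd_iff_le.mpr hle, by omega, Nat.le_of_dvd hNpos hdvdN⟩
  have hfin : S.Finite :=
    (Ideal.finite_setOf_absNorm_le N).subset (fun 𝔭 h𝔭 => (key 𝔭 h𝔭).2.2.2.2)
  set F := hfin.toFinset with hF
  have hmemF : ∀ 𝔭, 𝔭 ∈ F ↔ 𝔭 ∈ S := fun 𝔭 => hfin.mem_toFinset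
  have hcardS : Nat.card S = F.card := by
    rw [Nat.card_coe_set_eq, Set.ncard_eq_toFinset_card _ hfin]
  set y := Real.exp (1 / δ) with hy
  have hypos : 0 < y := Real.exp_pos _
  have hy1 : 1 ≤ y := Real.one_le_exp (by positivity)
  set A := F.filter (fun 𝔭 => (Ideal.absNorm 𝔭 : ℝ) < y) with hA
  set B := F.filter (fun 𝔭 => ¬ (Ideal.absNorm 𝔭 : ℝ) < y) with hB
  have hsplit : A.card + B.card = F.card :=
    Finset.card_filter_add_card_filter_not _
  -- bound on B
  have hprodB : (∏ 𝔭 ∈ B, Ideal.absNorm 𝔭) ∣ N := by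
    have : (∏ 𝔭 ∈ B, 𝔭) ∣ 𝔞 := by
      refine Finset.prod_primes_dvd 𝔞 (fun 𝔭 h𝔭 => ?_) (fun 𝔭 h𝔭 => ?_)
      · have hk := key 𝔭 ((hmemF 𝔭).mp (Finset.mem_filter.mp h𝔭).1)
        exact Ideal.prime_of_isPrime hk.2.1 hk.1
      · exact (key 𝔭 ((hmemF 𝔭).mp (Finset.mem_filter.mp h𝔭).1)).2.2.1
    rw [← map_prod]
    exact Ideal.absNorm_dvd_absNorm_of_le (Ideal.le_of_dvd this)
  have hBpow : y ^ B.card ≤ (N : ℝ) := by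
    calc y ^ B.card = ∏ _𝔭 ∈ B, y := (Finset.prod_const y).symm
    _ ≤ ∏ 𝔭 ∈ B, (Ideal.absNorm 𝔭 : ℝ) := by
        refine Finset.prod_le_prod (fun _ _ => hypos.le) (fun 𝔭 h𝔭 => ?_)
        exact not_lt.mp (Finset.mem_filter.mp h𝔭).2
    _ = ((∏ 𝔭 ∈ B, Ideal.absNorm 𝔭 : ℕ) : ℝ) := by push_cast; rfl
    _ ≤ (N : ℝ) := Nat.cast_le.mpr (Nat.le_of_dvd hNpos hprodB)
  have hBcard : (B.card : ℝ) ≤ δ * Real.log N := by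
    have hlog := Real.log_le_log (by positivity) hBpow
    rw [Real.log_pow, hy, Real.log_exp] at hlog
    have := mul_le_mul_of_nonneg_left hlog hδ.le
    calc (B.card : ℝ) = δ * (B.card * (1 / δ)) := by field_simp
    _ ≤ δ * Real.log N := this
  -- bound on A
  set g : Ideal (𝓞 K) → ℕ := fun 𝔭 =>
    if h : ∃ p : ℕ, p.Prime ∧ (p : 𝓞 K) ∈ 𝔭 ∧ p ≤ Ideal.absNorm 𝔭 then h.choose else 0
    with hg
  have hgspec : ∀ 𝔭 ∈ F, (g 𝔭).Prime ∧ ((g 𝔭 : ℕ) : 𝓞 K) ∈ 𝔭 ∧ g 𝔭 ≤ Ideal.absNorm 𝔭 := by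
    intro 𝔭 h𝔭
    have hk := key 𝔭 ((hmemF 𝔭).mp h𝔭)
    obtain ⟨p, hp, hpd, hpm⟩ := aux_exists_prime 𝔭 hk.1 (Ideal.absNorm 𝔭)
      (by omega) (Ideal.absNorm_mem 𝔭)
    have hex : ∃ p : ℕ, p.Prime ∧ (p : 𝓞 K) ∈ 𝔭 ∧ p ≤ Ideal.absNorm 𝔭 :=
      ⟨p, hp, hpm, Nat.le_of_dvd (by omega) hpd⟩
    rw [hg]; simp only [dif_pos hex]
    exact ⟨hex.choose_spec.1, hex.choose_spec.2.1, hex.choose_spec.2.2⟩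
  have hAcard : A.card ≤ (A.image g).card * n := by
    rw [Finset.card_eq_sum_card_fiberwise (f := g) (t := A.image g)
      (fun x hx => Finset.mem_image_of_mem g hx)]
    refine Finset.sum_le_card_nsmul _ _ n (fun p hp => ?_)
    obtain ⟨𝔭0, h𝔭0, rfl⟩ := Finset.mem_image.mp hp
    have h𝔭0F : 𝔭0 ∈ F := (Finset.mem_filter.mp h𝔭0).1
    refine aux_card_fiber K _ (hgspec 𝔭0 h𝔭0F).1 _ (fun 𝔮 h𝔮 => ?_)
    obtain ⟨h𝔮A, h𝔮g⟩ := Finset.mem_filter.mp h𝔮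
    have h𝔮F : 𝔮 ∈ F := (Finset.mem_filter.mp h𝔮A).1
    have hk := key 𝔮 ((hmemF 𝔮).mp h𝔮F)
    exact ⟨hk.1, hk.2.1, h𝔮g ▸ (hgspec 𝔮 h𝔮F).2.1⟩
  have himg : (A.image g).card ≤ ⌈y⌉₊ := by
    have hsub : A.image g ⊆ Finset.range ⌈y⌉₊ := by
      intro p hp
      obtain ⟨𝔭0, h𝔭0, rfl⟩ := Finset.mem_image.mp hp
      have h𝔭0F : 𝔭0 ∈ F := (Finset.mem_filter.mp h𝔭0).1
      have hlt : (Ideal.absNorm 𝔭0 : ℝ) < y := (Finset.mem_filter.mp h𝔭0).2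
      have : ((g 𝔭0 : ℕ) : ℝ) < y :=
        lt_of_le_of_lt (by exact_mod_cast Nat.cast_le.mpr (hgspec 𝔭0 h𝔭0F).2.2) hlt
      exact Finset.mem_range.mpr (Nat.lt_ceil.mpr this)
    simpa using Finset.card_le_card hsub
  have hApart : (A.card : ℝ) ≤ Real.exp (1 + 1 / δ) * n := by
    have h1 : (A.card : ℝ) ≤ (⌈y⌉₊ : ℝ) * n := by
      calc (A.card : ℝ) ≤ ((A.image g).card : ℝ) * n := by exact_mod_cast hAcard
      _ ≤ (⌈y⌉₊ : ℝ) * n :=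
        mul_le_mul_of_nonneg_right (by exact_mod_cast himg) (Nat.cast_nonneg n)
    have h2 : (⌈y⌉₊ : ℝ) ≤ y + 1 := (Nat.ceil_lt_add_one hypos.le).le
    have h3 : y + 1 ≤ Real.exp (1 + 1 / δ) := by
      rw [Real.exp_add]
      nlinarith [Real.add_one_le_exp (1 : ℝ), hy1]
    have hn0 : (0 : ℝ) ≤ n := Nat.cast_nonneg n
    nlinarith
  -- combine
  have hcards : (Nat.card S : ℝ) = (A.card : ℝ) + (B.card : ℝ) := by
    rw [hcardS, ← hsplit]; push_cast; ring
  rw [hcards]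
  exact add_le_add hApart hBcard
end
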